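/- The real number arccos(√2/4)/π is irrational; that is, θ = arccos(√2/4) is not a rational multiple of π. -/

import Mathlib

private def nivenSeq : ℕ → ℤ
  | 0 => 2
  | 1 => 1
  | (n + 2) => nivenSeq (n + 1) - 2 * nivenSeq n

private lemma nivenSeq_odd : ∀ n : ℕ, Odd (nivenSeq (n + 1)) := by
  intro n
  induction n with
  | zero => exact ⟨0, rfl⟩
  | succ k ih =>
    show Odd (nivenSeq (k + 1) - 2 * nivenSeq k)
    rcases ih with ⟨m, hm⟩
    exact ⟨m - nivenSeq k, by omega⟩

private lemma nivenSeq_val :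
    ∀ n : ℕ, (nivenSeq n : ℝ) =
      2 * Real.cos (n * Real.arccos (Real.sqrt 2 / 4)) * Real.sqrt 2 ^ n := by
  have h2 : Real.sqrt 2 ^ 2 = 2 := Real.sq_sqrt (by norm_num)
  have hle : Real.sqrt 2 / 4 ≤ 1 := by
    nlinarith [Real.sq_sqrt (show (0:ℝ) ≤ 2 by norm_num), Real.sqrt_nonneg 2]
  have hge : (-1 : ℝ) ≤ Real.sqrt 2 / 4 := by
    nlinarith [Real.sqrt_nonneg 2]
  set θ := Real.arccos (Real.sqrt 2 / 4) with hθ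
  have hcos : Real.cos θ = Real.sqrt 2 / 4 := Real.cos_arccos hge hle
  have key : ∀ n : ℕ,
      (nivenSeq n : ℝ) = 2 * Real.cos (n * θ) * Real.sqrt 2 ^ n ∧
      (nivenSeq (n+1) : ℝ) = 2 * Real.cos (((n:ℝ)+1) * θ) * Real.sqrt 2 ^ (n+1) := by
    intro n
    induction n with
    | zero =>
      constructor
      · simp [nivenSeq]
      · show ((1 : ℤ) : ℝ) = _
        simp only [Nat.cast_zero, Nat.cast_one, zero_add, one_mul, pow_one]
        rw [hcos]
        nlinarith [Real.sq_sqrt (show (0:ℝ) ≤ 2 by norm_num)]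
    | succ k ih =>
      obtain ⟨ih0, ih1⟩ := ih
      constructor
      · push_cast
        exact ih1
      · have hrec : Real.cos (((k:ℝ) + 2) * θ) =
            2 * Real.cos θ * Real.cos (((k:ℝ) + 1) * θ) - Real.cos ((k:ℝ) * θ) := by
          have e1 : ((k:ℝ) + 2) * θ = ((k:ℝ)+1) * θ + θ := by ring
          have e2 : ((k:ℝ)) * θ = ((k:ℝ)+1) * θ - θ := by ring
          rw [e1, e2, Real.cos_add, Real.cos_sub]
          ring
        show ((nivenSeq (k+1) - 2 * nivenSeq k : ℤ) : ℝ) = _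
        push_cast [ih0, ih1]
        have e3 : ((k:ℝ) + 1 + 1) = (k:ℝ) + 2 := by ring
        rw [e3, hrec, hcos]
        have hk2 : Real.sqrt 2 ^ (k + 1 + 1) = 2 * Real.sqrt 2 ^ k := by
          rw [pow_succ, pow_succ, mul_assoc, ← sq, h2]; ring
        have hk1 : Real.sqrt 2 ^ (k + 1) = Real.sqrt 2 ^ k * Real.sqrt 2 := by
          rw [pow_succ]
        rw [hk2, hk1]
        ring
  exact fun n => (key n).1

/-- `θ = arccos(√2/4)` is not a rational multiple of `π`:
the quotient `arccos(√2/4)/π` is irrational. -/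
theorem arccos_div_pi_irrational :
    Irrational (Real.arccos (Real.sqrt 2 / 4) / Real.pi) := by
  set θ := Real.arccos (Real.sqrt 2 / 4) with hθ
  rintro ⟨q, hq⟩
  have hπ : Real.pi ≠ 0 := Real.pi_ne_zero
  have hθeq : θ = (q : ℝ) * Real.pi := by
    field_simp at hq
    linarith [hq]
  set d := q.den with hd
  have hdpos : 0 < d := q.pos
  have hdq : ((d:ℝ)) * (q : ℝ) = (q.num : ℝ) := by
    rw [Rat.cast_def]
    field_simp
    rw [hd]; ring
  have hNθ : ((2 * d : ℕ) : ℝ) * θ = ((2 * q.num : ℤ) : ℝ) * Real.pi := by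
    rw [hθeq]
    push_cast
    linear_combination 2 * Real.pi * hdq
  have hcosN : Real.cos (((2 * d : ℕ) : ℝ) * θ) = 1 := by
    rw [hNθ]
    have : ((2 * q.num : ℤ) : ℝ) * Real.pi = (q.num : ℤ) * (2 * Real.pi) := by
      push_cast; ring
    rw [this, Real.cos_int_mul_two_pi]
  have hval := nivenSeq_val (2 * d)
  rw [hcosN] at hval
  have hpow : Real.sqrt 2 ^ (2 * d) = ((2 : ℤ) ^ d : ℤ) := by
    rw [pow_mul, Real.sq_sqrt (by norm_num : (0:ℝ) ≤ 2)]
    norm_num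
  rw [hpow] at hval
  have hint : nivenSeq (2 * d) = 2 * 2 ^ d := by
    have : ((nivenSeq (2 * d) : ℤ) : ℝ) = ((2 * 2 ^ d : ℤ) : ℝ) := by
      rw [hval]; push_cast; ring
    exact_mod_cast this
  have hodd : Odd (nivenSeq (2 * d)) := by
    have h21 : 2 * d = (2 * d - 1) + 1 := by omega
    rw [h21]
    exact nivenSeq_odd _
  rw [hint] at hodd
  rcases hodd with ⟨m, hm⟩
  have : (0:ℤ) < 2 ^ d := by positivity
  omega
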